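/- Let P be a probability measure on ℝ with finite Laplace transform L(t) for all t, satisfying the median condition P_t((−∞,t)) ≤ 1/2 ≤ P_t((−∞,t]) for all t, where P_t(dx) = e^{tx}P(dx)/L(t). Then for every A > 0 there is a finite constant c_A such that P((s,t)) ≤ c_A·(t−s) for all −A ≤ s < t ≤ A. -/

import Mathlib

open MeasureTheory Real
open scoped ENNReal

lemma aux_abs_exp_sub_exp (a b : ℝ) :
    |Real.exp a - Real.exp b| ≤ |a - b| * Real.exp (max a b) := by
  wlog h : b ≤ a with H
  · have := H b a (le_of_not_ge h)
    rwa [abs_sub_comm, abs_sub_comm b a, max_comm] at this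
  · rw [abs_of_nonneg (sub_nonneg.2 (Real.exp_le_exp.2 h)),
      abs_of_nonneg (sub_nonneg.2 h), max_eq_left h]
    have h1 : Real.exp b = Real.exp a * Real.exp (b - a) := by
      rw [← Real.exp_add]; ring_nf
    have h2 : (b - a) + 1 ≤ Real.exp (b - a) := Real.add_one_le_exp _
    nlinarith [Real.exp_pos a]

set_option maxHeartbeats 1000000 in
theorem lipschitz_estimate_of_median_condition
    (P : Measure ℝ) [IsProbabilityMeasure P]
    (hint : ∀ t : ℝ, Integrable (fun x => exp (t * x)) P)
    (hmed : ∀ t : ℝ,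
      (P.withDensity (fun x => ENNReal.ofReal (exp (t * x) / ∫ y, exp (t * y) ∂P)))
          (Set.Iio t) ≤ 1 / 2 ∧
      (1 / 2 : ℝ≥0∞) ≤
        (P.withDensity (fun x => ENNReal.ofReal (exp (t * x) / ∫ y, exp (t * y) ∂P)))
          (Set.Iic t)) :
    ∀ A > (0 : ℝ), ∃ c : ℝ, ∀ s t : ℝ, -A ≤ s → s < t → t ≤ A →
      (P (Set.Ioo s t)).toReal ≤ c * (t - s) := by
  -- notation
  set L : ℝ → ℝ := fun t => ∫ y, exp (t * y) ∂P with hLdef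
  have hL_pos : ∀ t, 0 < L t := by
    intro t
    rw [hLdef]
    rw [integral_pos_iff_support_of_nonneg_ae
      (Filter.Eventually.of_forall fun x => (exp_pos _).le) (hint t)]
    have : (Function.support fun x => exp (t * x)) = Set.univ := by
      ext x; simp [Function.mem_support, (exp_pos (t * x)).ne']
    rw [this]
    simp
  -- rewrite the withDensity measure of a measurable set
  have key : ∀ (t : ℝ) (S : Set ℝ), MeasurableSet S →
      (P.withDensity (fun x => ENNReal.ofReal (exp (t * x) / L t))) S
        = ENNReal.ofReal ((∫ x in S, exp (t * x) ∂P) / L t) := by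
    intro t S hS
    rw [withDensity_apply _ hS, ← ofReal_integral_eq_lintegral_ofReal,
      integral_div]
    · exact ((hint t).div_const _).restrict
    · exact Filter.Eventually.of_forall fun x => by positivity
  have hhalf : (1 / 2 : ℝ≥0∞) = ENNReal.ofReal (1 / 2 : ℝ) := by
    rw [ENNReal.ofReal_div_of_pos (by norm_num)]
    norm_num
  -- the two median inequalities in real form
  have h_lo : ∀ t : ℝ, ∫ x in Set.Iio t, exp (t * x) ∂P ≤ L t / 2 := by
    intro t
    have h := (hmed t).1
    rw [key t _ measurableSet_Iio, hhalf, ENNReal.ofReal_le_ofReal_iff (by norm_num)] at h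
    rw [div_le_div_iff₀ (hL_pos t) (by norm_num)] at h
    linarith
  have h_hi : ∀ t : ℝ, L t / 2 ≤ ∫ x in Set.Iic t, exp (t * x) ∂P := by
    intro t
    have h := (hmed t).2
    have hnn : (0:ℝ) ≤ (∫ x in Set.Iic t, exp (t * x) ∂P) / L t := by
      apply div_nonneg _ (hL_pos t).le
      exact setIntegral_nonneg measurableSet_Iic fun x _ => (exp_pos _).le
    rw [key t _ measurableSet_Iic, hhalf, ENNReal.ofReal_le_ofReal_iff hnn] at h
    rw [div_le_div_iff₀ (by norm_num) (hL_pos t)] at h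
    linarith
  intro A hA
  -- the dominating integrable function
  set g : ℝ → ℝ := fun x => |x| * exp (A * |x|) with hgdef
  have hg_nonneg : ∀ x, 0 ≤ g x := fun x => by positivity
  have hg_cont : Continuous g := by
    apply continuous_abs.mul
    exact Real.continuous_exp.comp (continuous_const.mul continuous_abs)
  have hg_int : Integrable g P := by
    have hbound : Integrable (fun x => exp ((A+1) * x) + exp (-(A+1) * x)) P := by
      exact (hint (A+1)).add (hint (-(A+1)))
    apply Integrable.mono hbound hg_cont.aestronglyMeasurable
    refine Filter.Eventually.of_forall fun x => ?_
    have h1 : |x| ≤ exp |x| := by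
      have := Real.add_one_le_exp |x|
      linarith [abs_nonneg x]
    have h2 : g x ≤ exp ((A+1) * |x|) := by
      calc g x = |x| * exp (A * |x|) := rfl
        _ ≤ exp |x| * exp (A * |x|) := by
            apply mul_le_mul_of_nonneg_right h1 (exp_pos _).le
        _ = exp ((A+1) * |x|) := by rw [← Real.exp_add]; ring_nf
    have h3 : exp ((A+1) * |x|) ≤ exp ((A+1) * x) + exp (-(A+1) * x) := by
      rcases abs_cases x with ⟨h, _⟩ | ⟨h, _⟩
      · rw [h]; linarith [(exp_pos (-(A+1) * x)).le]
      · have he : (A+1) * |x| = -(A+1) * x := by rw [h]; ring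
        rw [he]; linarith [(exp_pos ((A+1) * x)).le]
    rw [Real.norm_eq_abs, Real.norm_eq_abs, abs_of_nonneg (hg_nonneg x),
      abs_of_nonneg (by positivity)]
    linarith
  set M : ℝ := ∫ x, g x ∂P with hMdef
  have hM_nonneg : 0 ≤ M := integral_nonneg hg_nonneg
  refine ⟨2 * exp (A * A) * M, fun s t hs hst ht => ?_⟩
  have hsA : |s| ≤ A := abs_le.2 ⟨hs, le_of_lt (lt_of_lt_of_le hst ht)⟩
  have htA : |t| ≤ A := abs_le.2 ⟨le_of_lt (lt_of_le_of_lt hs hst), ht⟩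
  -- pointwise difference bound
  have hdiff : ∀ x : ℝ, |exp (s * x) - exp (t * x)| ≤ (t - s) * g x := by
    intro x
    have h1 := aux_abs_exp_sub_exp (s * x) (t * x)
    have h2 : |s * x - t * x| = (t - s) * |x| := by
      rw [show s * x - t * x = -((t - s) * x) by ring, abs_neg, abs_mul,
        abs_of_nonneg (by linarith : (0:ℝ) ≤ t - s)]
    have h3 : max (s * x) (t * x) ≤ A * |x| := by
      apply max_le
      · calc s * x ≤ |s * x| := le_abs_self _
          _ = |s| * |x| := abs_mul _ _
          _ ≤ A * |x| := mul_le_mul_of_nonneg_right hsA (abs_nonneg x)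
      · calc t * x ≤ |t * x| := le_abs_self _
          _ = |t| * |x| := abs_mul _ _
          _ ≤ A * |x| := mul_le_mul_of_nonneg_right htA (abs_nonneg x)
    calc |exp (s * x) - exp (t * x)| ≤ |s * x - t * x| * exp (max (s * x) (t * x)) := h1
      _ ≤ ((t - s) * |x|) * exp (A * |x|) := by
          rw [h2]
          exact mul_le_mul_of_nonneg_left (Real.exp_le_exp.2 h3) (mul_nonneg (by linarith) (abs_nonneg x))
      _ = (t - s) * g x := by rw [hgdef]; ring
  -- integrals over the three pieces
  have hint_s := hint s
  have hint_t := hint t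
  set I1 : ℝ := ∫ x in Set.Iic s, exp (s * x) ∂P with hI1
  set I2 : ℝ := ∫ x in Set.Ioo s t, exp (s * x) ∂P with hI2
  set I3 : ℝ := ∫ x in Set.Ici t, exp (s * x) ∂P with hI3
  set J1 : ℝ := ∫ x in Set.Iic s, exp (t * x) ∂P with hJ1
  set J2 : ℝ := ∫ x in Set.Ioo s t, exp (t * x) ∂P with hJ2
  set J3 : ℝ := ∫ x in Set.Ici t, exp (t * x) ∂P with hJ3
  have hsplit : ∀ f : ℝ → ℝ, Integrable f P →
      ∫ x, f x ∂P = (∫ x in Set.Iic s, f x ∂P) + (∫ x in Set.Ioo s t, f x ∂P)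
        + (∫ x in Set.Ici t, f x ∂P) := by
    intro f hf
    have d1 : Disjoint (Set.Iic s) (Set.Ioo s t) := by
      apply Set.disjoint_left.2
      intro x hx hx'
      exact absurd hx' (by simp [Set.mem_Ioo]; intro h; linarith [Set.mem_Iic.1 hx])
    have e1 : Set.Iic s ∪ Set.Ioo s t = Set.Iio t := Set.Iic_union_Ioo_eq_Iio hst
    have d2 : Disjoint (Set.Iio t) (Set.Ici t) := by
      apply Set.disjoint_left.2
      intro x hx hx'
      exact absurd (Set.mem_Ici.1 hx') (not_le.2 (Set.mem_Iio.1 hx))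
    have e2 : Set.Iio t ∪ Set.Ici t = Set.univ := Set.Iio_union_Ici
    have step1 : ∫ x in Set.Iio t, f x ∂P
        = (∫ x in Set.Iic s, f x ∂P) + (∫ x in Set.Ioo s t, f x ∂P) := by
      rw [← e1, setIntegral_union d1 measurableSet_Ioo hf.integrableOn hf.integrableOn]
    have step2 : ∫ x, f x ∂P
        = (∫ x in Set.Iio t, f x ∂P) + (∫ x in Set.Ici t, f x ∂P) := by
      rw [← setIntegral_union d2 measurableSet_Ici hf.integrableOn hf.integrableOn, e2,
        Measure.restrict_univ]
    rw [step2, step1]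
  have hLs : L s = I1 + I2 + I3 := hsplit _ hint_s
  have hLt : L t = J1 + J2 + J3 := hsplit _ hint_t
  -- median at s: L s / 2 ≤ I1
  have hmed_s : L s / 2 ≤ I1 := h_hi s
  -- median at t: J1 + J2 ≤ L t / 2
  have hmed_t : J1 + J2 ≤ L t / 2 := by
    have h := h_lo t
    have e1 : Set.Iic s ∪ Set.Ioo s t = Set.Iio t := Set.Iic_union_Ioo_eq_Iio hst
    have d1 : Disjoint (Set.Iic s) (Set.Ioo s t) := by
      apply Set.disjoint_left.2
      intro x hx hx'
      exact absurd hx' (by simp [Set.mem_Ioo]; intro h; linarith [Set.mem_Iic.1 hx])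
    rw [← e1, setIntegral_union d1 measurableSet_Ioo hint_t.integrableOn
      hint_t.integrableOn] at h
    exact h
  -- difference bounds
  have hbound1 : I1 - J1 ≤ (t - s) * M := by
    have : I1 - J1 = ∫ x in Set.Iic s, (exp (s * x) - exp (t * x)) ∂P := by
      rw [integral_sub hint_s.integrableOn hint_t.integrableOn]
    rw [this]
    calc ∫ x in Set.Iic s, (exp (s * x) - exp (t * x)) ∂P
        ≤ ∫ x in Set.Iic s, (t - s) * g x ∂P := by
          apply integral_mono (hint_s.integrableOn.sub hint_t.integrableOn)
            ((hg_int.const_mul _).integrableOn)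
          intro x
          have := hdiff x
          have := le_abs_self (exp (s * x) - exp (t * x))
          dsimp; linarith
      _ ≤ ∫ x, (t - s) * g x ∂P := by
          apply setIntegral_le_integral (hg_int.const_mul _)
          exact Filter.Eventually.of_forall fun x => by
            have := hg_nonneg x; dsimp; nlinarith
      _ = (t - s) * M := by rw [integral_const_mul]
  have hbound2 : J3 - I3 ≤ (t - s) * M := by
    have : J3 - I3 = ∫ x in Set.Ici t, (exp (t * x) - exp (s * x)) ∂P := by
      rw [integral_sub hint_t.integrableOn hint_s.integrableOn]
    rw [this]
    calc ∫ x in Set.Ici t, (exp (t * x) - exp (s * x)) ∂P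
        ≤ ∫ x in Set.Ici t, (t - s) * g x ∂P := by
          apply integral_mono (hint_t.integrableOn.sub hint_s.integrableOn)
            ((hg_int.const_mul _).integrableOn)
          intro x
          have h1 := hdiff x
          have h2 := neg_abs_le (exp (s * x) - exp (t * x))
          dsimp; linarith
      _ ≤ ∫ x, (t - s) * g x ∂P := by
          apply setIntegral_le_integral (hg_int.const_mul _)
          exact Filter.Eventually.of_forall fun x => by
            have := hg_nonneg x; dsimp; nlinarith
      _ = (t - s) * M := by rw [integral_const_mul]
  -- lower bound for I2 + J2
  set μR : ℝ := (P (Set.Ioo s t)).toReal with hmuR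
  have hμ_fin : P (Set.Ioo s t) ≠ ⊤ := measure_ne_top _ _
  have hlow : exp (-(A * A)) * μR ≤ I2 := by
    have hconst : ∫ _ in Set.Ioo s t, exp (-(A * A)) ∂P = exp (-(A * A)) * μR := by
      rw [setIntegral_const]; rw [smul_eq_mul, measureReal_def, hmuR]; ring
    rw [← hconst]
    apply setIntegral_mono_on (integrableOn_const (measure_ne_top P _))
      hint_s.integrableOn measurableSet_Ioo
    intro x hx
    apply Real.exp_le_exp.2
    have hx1 : -A ≤ x := le_trans hs (le_of_lt hx.1)
    have hx2 : x ≤ A := le_trans (le_of_lt hx.2) ht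
    have : |x| ≤ A := abs_le.2 ⟨hx1, hx2⟩
    nlinarith [abs_le.1 hsA, abs_le.1 this, neg_abs_le s, le_abs_self s,
      neg_abs_le x, le_abs_self x]
  -- combine
  have hkey : I2 ≤ (t - s) * M + (t - s) * M := by
    have h1 : I2 + I3 ≤ I1 := by
      have := hmed_s; rw [hLs] at this; linarith
    have h2 : J2 ≤ J3 - J1 := by
      have := hmed_t; rw [hLt] at this; linarith
    have hJ2nn : 0 ≤ J2 := setIntegral_nonneg measurableSet_Ioo fun x _ => (exp_pos _).le
    -- I2 ≤ I1 - I3 ≤ J1 + (t-s)M - I3 ; and 0 ≤ J2 ≤ J3 - J1 ≤ I3 + (t-s)M - J1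
    linarith
  have hexp1 : exp (-(A * A)) * exp (A * A) = 1 := by
    rw [← Real.exp_add]; simp
  have hfinal : exp (-(A * A)) * μR ≤ (t - s) * M + (t - s) * M := le_trans hlow hkey
  have := mul_le_mul_of_nonneg_left hfinal (exp_pos (A * A)).le
  calc μR = exp (A * A) * (exp (-(A * A)) * μR) := by
        rw [← mul_assoc, mul_comm (exp (A*A)), hexp1, one_mul]
    _ ≤ exp (A * A) * ((t - s) * M + (t - s) * M) := this
    _ = 2 * exp (A * A) * M * (t - s) := by ring
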